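/- Let X = ℂPⁿ = GL(n+1,ℂ)/P, where P is the parabolic subgroup of matrices whose first column is (λ,0,…,0)ᵗ with λ ∈ ℂ*. Let p : ℂ^{n+1}∖{0} → ℂPⁿ be the canonical projection and v_i = p_*(z_i ∂/∂z_i) for i = 0,1,…,n. Then the standard Poisson structure on X = ℂPⁿ, defined as π_st = μ(r_𝔤) where r_𝔤 = Σ_{0≤i<j≤n} e_{ij} ∧ e_{ji} is the standard r-matrix of 𝔤 = gl(n+1,ℂ) and μ : ∧²𝔤 → 𝔛²(X) is induced by the G-action, can be written as π_st = Σ_{1≤i<j≤n} v_i ∧ v_j. -/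

import Mathlib

/-!
Formalization of statements from "Poisson Cohomology of holomorphic toric Poisson
manifolds. I." (W. Hong).

Modeling conventions.  Mathlib has no holomorphic geometry of ℂPⁿ, so we use the
standard faithful algebraic model: a holomorphic multivector field on a toric variety
is determined by its restriction to the dense open torus, where (in the invariant
frame and with Laurent-monomial coefficients) multivector fields form the algebra
`MV n = AddMonoidAlgebra (ExteriorAlgebra ℂ ℂⁿ) ℤⁿ`: the element `single I ω`
represents `χ^I ⊗ ω` (`χ^I` the Laurent monomial of weight `I`, `ω` a constant
multivector in the frame `v_1, …, v_n`, `v_i = ρ(e_i)`).  Multiplication is the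
wedge product.  Similarly `AMV n` models multivector fields on ℂ^{n+1}∖{0} in the
frame `u_i = z_i ∂/∂z_i`.  Holomorphic multivector fields on ℂPⁿ are defined as the
image under `p_*` of the k-vector fields on ℂ^{n+1} with homogeneous polynomial
coefficients of degree k (this is exactly the classical description of
`H⁰(ℂPⁿ, ∧ᵏ𝒯)`, due to Bondal).  The Schouten differential `d_π = [π,·]` of a
torus-invariant bivector `π = ρ(Π)` acts weightwise by
`[π, χ^I ⊗ ω] = χ^I ⊗ (ι(ι_I Π) ∧ ω)`.
-/

noncomputable section
open Finset

namespace CPn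

variable (n : ℕ)

/-- Laurent multivector fields on the open torus (ℂ*)ⁿ ⊆ ℂPⁿ, in the invariant frame. -/
abbrev MV := AddMonoidAlgebra (ExteriorAlgebra ℂ (Fin n → ℂ)) (Fin n → ℤ)

/-- Ambient model: multivector fields on ℂ^{n+1}∖{0} with Laurent-monomial
coefficients, in the frame u_i = z_i ∂/∂z_i. -/
abbrev AMV := AddMonoidAlgebra (ExteriorAlgebra ℂ (Fin (n+1) → ℂ)) (Fin (n+1) → ℤ)

/-- The Laurent monomial χ^I as a multivector field (of degree 0). -/
def χ (I : Fin n → ℤ) : MV n := AddMonoidAlgebra.single I 1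

/-- The vectors e_0 = −(e_1+⋯+e_n), e_1, …, e_n in N_ℂ = ℂⁿ. -/
def EE : Fin (n+1) → (Fin n → ℂ) :=
  Fin.cases (fun _ => -1) (fun j => Pi.single j 1)

/-- The holomorphic vector fields v_i = ρ(e_i) = p_*(z_i ∂/∂z_i), 0 ≤ i ≤ n. -/
def v (i : Fin (n+1)) : MV n :=
  AddMonoidAlgebra.single 0 (ExteriorAlgebra.ι ℂ (EE n i))

/-- W = span_ℂ{v_1,…,v_n} = ρ(N_ℂ). -/
def W : Submodule ℂ (MV n) :=
  Submodule.span ℂ {x | ∃ i : Fin (n+1), i ≠ 0 ∧ x = v n i}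

/-- Extension of a weight I ∈ M ≅ ℤⁿ to (m_0, m_1, …, m_n), m_0 = −Σᵢ m_i, m_i = ⟨I,e_i⟩. -/
def mext (I : Fin n → ℤ) : Fin (n+1) → ℤ :=
  Fin.cases (-(∑ j, I j)) I

/-- The set of indices 0 ≤ i ≤ n with m_i = −1. -/
def deg1Set (I : Fin n → ℤ) : Finset (Fin (n+1)) :=
  univ.filter fun i => mext n I i = -1

/-- |I| = number of entries of (m_0,…,m_n) equal to −1. -/
def wt (I : Fin n → ℤ) : ℕ := (deg1Set n I).card

/-- 𝒱_I = v_{i_1} ∧ ⋯ ∧ v_{i_l}, where m_{i_1},…,m_{i_l} are the entries equal to −1. -/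
def VI (I : Fin n → ℤ) : MV n :=
  (((deg1Set n I).sort (· ≤ ·)).map (v n)).prod

/-- χ^I · 𝒱_I. -/
def chiVI (I : Fin n → ℤ) : MV n := χ n I * VI n I

/-- ℰ_I = e_{i_1} ∧ ⋯ ∧ e_{i_l} ∈ ∧^l N_ℂ (inside the exterior algebra of N_ℂ). -/
def EI (I : Fin n → ℤ) : ExteriorAlgebra ℂ (Fin n → ℂ) :=
  (((deg1Set n I).sort (· ≤ ·)).map fun i => ExteriorAlgebra.ι ℂ (EE n i)).prod

/-- V_I^k = ℂ(χ^I·𝒱_I) ∧ W^{k−|I|}. -/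
def VIk (I : Fin n → ℤ) (k : ℕ) : Submodule ℂ (MV n) :=
  Submodule.span ℂ {chiVI n I} * (W n) ^ (k - wt n I)

/-- u_i = z_i ∂/∂z_i on ℂ^{n+1}. -/
def uu (i : Fin (n+1)) : AMV n :=
  AddMonoidAlgebra.single 0 (ExteriorAlgebra.ι ℂ (Pi.single i 1))

/-- The Euler vector field e⃗ = Σ_i z_i ∂/∂z_i. -/
def eulerA : AMV n := ∑ i, uu n i

/-- The derivative of p : ℂ^{n+1}∖{0} → ℂPⁿ on the invariant frame:
the frame vector of u_i is sent to e_i (so e_0 = −Σ e_j); in coordinates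
w ↦ (w_j − w_0)_{1≤j≤n}. -/
def q : (Fin (n+1) → ℂ) →ₗ[ℂ] (Fin n → ℂ) :=
  LinearMap.pi fun j =>
    (LinearMap.proj j.succ : (Fin (n+1) → ℂ) →ₗ[ℂ] ℂ) -
      (LinearMap.proj (0 : Fin (n+1)) : (Fin (n+1) → ℂ) →ₗ[ℂ] ℂ)

/-- Pushforward p_* along p : ℂ^{n+1}∖{0} → ℂPⁿ (on torus-invariant fields, i.e.
those of weight a with Σ a = 0, this is the honest pushforward; the weight a
corresponds to the monomial of weight (a_1,…,a_n) in the coordinates t_j = z_j/z_0). -/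
def pstar : AMV n →ₗ[ℂ] MV n :=
  (Finsupp.lsum ℂ fun (a : Fin (n+1) → ℤ) =>
    (AddMonoidAlgebra.lsingle (fun j : Fin n => a j.succ) :
        ExteriorAlgebra ℂ (Fin n → ℂ) →ₗ[ℂ] MV n) ∘ₗ
      (ExteriorAlgebra.map (q n)).toLinearMap) ∘ₗ
    (AddMonoidAlgebra.coeffLinearEquiv ℂ).toLinearMap

/-- u_{i_1} ∧ ⋯ ∧ u_{i_k} for T = {i_1 < ⋯ < i_k} (constant-coefficient part). -/
def wedgeT (T : Finset (Fin (n+1))) : ExteriorAlgebra ℂ (Fin (n+1) → ℂ) :=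
  ((T.sort (· ≤ ·)).map fun i => ExteriorAlgebra.ι ℂ (Pi.single i 1)).prod

/-- F̃_k: the k-vector fields on ℂ^{n+1} whose coefficients in the frame
∂_{i_1}∧⋯∧∂_{i_k} are homogeneous polynomials of degree k, restricted to the torus
(z^b ∂_T = z^{b−ε_T} u_T). -/
def Ftilde (k : ℕ) : Submodule ℂ (AMV n) :=
  Submodule.span ℂ
    { x | ∃ (b : Fin (n+1) → ℕ) (T : Finset (Fin (n+1))), T.card = k ∧ (∑ i, b i) = k ∧
        x = AddMonoidAlgebra.single (fun i => (b i : ℤ) - (if i ∈ T then 1 else 0)) (wedgeT n T) }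

/-- H⁰(ℂPⁿ, ∧ᵏ𝒯) = p_*(F̃_k): holomorphic k-vector fields on ℂPⁿ. -/
def H0 (k : ℕ) : Submodule ℂ (MV n) := Submodule.map (pstar n) (Ftilde n k)

/-- ι_I Π ∈ N_ℂ for Π = Σ_{i<j} a i j · e_i∧e_j, where
ι_I (e_i∧e_j) = ⟨I,e_i⟩e_j − ⟨I,e_j⟩e_i. -/
def contr (a : Fin n → Fin n → ℂ) (I : Fin n → ℤ) : Fin n → ℂ := fun j =>
  ∑ p ∈ univ.filter (fun p : Fin n × Fin n => p.1 < p.2),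
    a p.1 p.2 * ((I p.1 : ℂ) * (if p.2 = j then 1 else 0) -
      (I p.2 : ℂ) * (if p.1 = j then 1 else 0))

/-- The toric bivector field π = Σ_{1≤i<j≤n} a i j · v_i ∧ v_j. -/
def piT (a : Fin n → Fin n → ℂ) : MV n :=
  ∑ p ∈ univ.filter (fun p : Fin n × Fin n => p.1 < p.2),
    a p.1 p.2 • (v n p.1.succ * v n p.2.succ)

/-- The Poisson differential d_π = [π, ·] (Schouten bracket with π = ρ(Π)):
on the toric frame it is given weightwise by [π, χ^I ⊗ ω] = χ^I ⊗ (ι(ι_I Π) ∧ ω). -/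
def dPi (a : Fin n → Fin n → ℂ) : MV n →ₗ[ℂ] MV n :=
  (Finsupp.lsum ℂ fun (I : Fin n → ℤ) =>
    (AddMonoidAlgebra.lsingle I : ExteriorAlgebra ℂ (Fin n → ℂ) →ₗ[ℂ] MV n) ∘ₗ
      LinearMap.mulLeft ℂ (ExteriorAlgebra.ι ℂ (contr n a I))) ∘ₗ
    (AddMonoidAlgebra.coeffLinearEquiv ℂ).toLinearMap

/-- S_k : weights I with all m_i ≥ −1 (0 ≤ i ≤ n) and |I| ≤ k. -/
def Sk (k : ℕ) : Set (Fin n → ℤ) := {I | (∀ i, -1 ≤ mext n I i) ∧ wt n I ≤ k}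

/-- S(k) : weights I with all m_i ≥ −1 (0 ≤ i ≤ n) and |I| = k. -/
def Slevel (k : ℕ) : Set (Fin n → ℤ) := {I | (∀ i, -1 ≤ mext n I i) ∧ wt n I = k}

/-- S_k(π) : I ∈ S_k satisfying (ι_I Π) ∧ ℰ_I = 0. -/
def SkPi (a : Fin n → Fin n → ℂ) (k : ℕ) : Set (Fin n → ℤ) :=
  {I | I ∈ Sk n k ∧ ExteriorAlgebra.ι ℂ (contr n a I) * EI n I = 0}

/-- S(k,π) : I with |I| = k, all m_i ≥ −1, satisfying (ι_I Π) ∧ ℰ_I = 0. -/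
def SlevelPi (a : Fin n → Fin n → ℂ) (k : ℕ) : Set (Fin n → ℤ) :=
  {I | I ∈ Slevel n k ∧ ExteriorAlgebra.ι ℂ (contr n a I) * EI n I = 0}

/-- Poisson cocycles in degree k: holomorphic k-vector fields killed by d_π. -/
def cocycles (a : Fin n → Fin n → ℂ) (k : ℕ) : Submodule ℂ (MV n) :=
  H0 n k ⊓ LinearMap.ker (dPi n a)

/-- Poisson coboundaries in degree k: d_π of the holomorphic (k−1)-vector fields. -/
def cobound (a : Fin n → Fin n → ℂ) : ℕ → Submodule ℂ (MV n)
  | 0 => ⊥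
  | (k+1) => Submodule.map (dPi n a) (H0 n k)

/-- The coefficient matrix of the standard Poisson structure π_st = Σ_{1≤i<j≤n} v_i∧v_j. -/
def aST : Fin n → Fin n → ℂ := fun _ _ => 1

/-- μ(e_{ij}) = p_*(z_j ∂/∂z_i), the fundamental vector field on ℂPⁿ of the elementary
matrix e_{ij} ∈ gl(n+1,ℂ), written upstairs on ℂ^{n+1}: z_j ∂/∂z_i = (z_j/z_i)·u_i. -/
def muE (i j : Fin (n+1)) : AMV n :=
  AddMonoidAlgebra.single (Pi.single j 1 - Pi.single i 1) (ExteriorAlgebra.ι ℂ (Pi.single i 1))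

lemma single_finset_sum' {ι E G : Type*} [Semiring E] [AddMonoid G] (s : Finset ι) (f : ι → E) (m : G) :
    ∑ i ∈ s, AddMonoidAlgebra.single m (f i) = AddMonoidAlgebra.single m (∑ i ∈ s, f i) :=
  (map_sum (AddMonoidAlgebra.singleAddHom m) f s).symm

lemma muE_mul (n : ℕ) (i j : Fin (n+1)) :
    muE n i j * muE n j i = AddMonoidAlgebra.single 0
      (ExteriorAlgebra.ι ℂ (Pi.single i 1) * ExteriorAlgebra.ι ℂ (Pi.single j 1)) := by
  unfold muE
  refine (AddMonoidAlgebra.single_mul_single ..).trans ?_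
  rw [show (Pi.single j 1 - Pi.single i 1) + (Pi.single i 1 - Pi.single j 1) = (0 : Fin (n+1) → ℤ) by abel]

lemma pstar_single (n : ℕ) (a : Fin (n+1) → ℤ) (ω : ExteriorAlgebra ℂ (Fin (n+1) → ℂ)) :
    pstar n (AddMonoidAlgebra.single a ω) =
      AddMonoidAlgebra.single (fun j : Fin n => a j.succ) (ExteriorAlgebra.map (q n) ω) := by
  simp only [pstar, LinearMap.comp_apply, LinearEquiv.coe_coe]; erw [Finsupp.lsum_single]; rfl

lemma q_EE (n : ℕ) (i : Fin (n+1)) : q n (Pi.single i 1) = EE n i := by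
  induction i using Fin.cases with
  | zero => funext k; simp [q, EE, Pi.single_apply, Fin.succ_ne_zero]
  | succ j =>
      funext k
      simp [q, EE, Pi.single_apply, (Fin.succ_ne_zero j).symm, Fin.succ_inj]

lemma sum_EE_succ (n : ℕ) : ∑ j : Fin n, EE n j.succ = -(EE n 0) := by
  funext k
  simp [EE, Finset.sum_apply, Pi.single_apply]

lemma key (n : ℕ) :
    ∑ p ∈ univ.filter (fun p : Fin (n+1) × Fin (n+1) => p.1 < p.2),
      (ExteriorAlgebra.ι ℂ (EE n p.1) * ExteriorAlgebra.ι ℂ (EE n p.2)) =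
    ∑ p ∈ univ.filter (fun p : Fin n × Fin n => p.1 < p.2),
      (ExteriorAlgebra.ι ℂ (EE n p.1.succ) * ExteriorAlgebra.ι ℂ (EE n p.2.succ)) := by
  rw [Finset.sum_filter, Finset.sum_filter, Fintype.sum_prod_type, Fintype.sum_prod_type,
    Fin.sum_univ_succ]
  have h0 : ∑ j : Fin (n+1), (if (0:Fin (n+1)) < j then
      ExteriorAlgebra.ι ℂ (EE n 0) * ExteriorAlgebra.ι ℂ (EE n j) else 0) = 0 := by
    rw [Fin.sum_univ_succ]
    simp only [lt_self_iff_false, if_false, zero_add, Fin.succ_pos, if_true]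
    rw [← Finset.mul_sum, ← map_sum, sum_EE_succ, map_neg, mul_neg,
      ExteriorAlgebra.ι_sq_zero, neg_zero]
  rw [h0, zero_add]
  refine Finset.sum_congr rfl fun i _ => ?_
  rw [Fin.sum_univ_succ]
  simp [Fin.succ_lt_succ_iff, Fin.not_lt_zero]

/-- The standard Poisson structure
π_st = μ(r_𝔤) = Σ_{0≤i<j≤n} μ(e_{ij}) ∧ μ(e_{ji}) on ℂPⁿ = GL(n+1,ℂ)/P, obtained from
the standard r-matrix r_𝔤 = Σ_{0≤i<j≤n} e_{ij} ∧ e_{ji} of gl(n+1,ℂ), can be written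
as π_st = Σ_{1≤i<j≤n} v_i ∧ v_j, where v_i = p_*(z_i ∂/∂z_i). -/
theorem standard_poisson_structure_on_CPn (n : ℕ) :
    pstar n (∑ p ∈ univ.filter (fun p : Fin (n+1) × Fin (n+1) => p.1 < p.2),
        muE n p.1 p.2 * muE n p.2 p.1) =
      piT n (fun _ _ => 1) := by
  simp only [muE_mul, map_sum, pstar_single]
  have h1 : ∀ p : Fin (n+1) × Fin (n+1),
      (AddMonoidAlgebra.single (fun j : Fin n => (0 : Fin (n+1) → ℤ) j.succ)
        (ExteriorAlgebra.map (q n)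
          (ExteriorAlgebra.ι ℂ (Pi.single p.1 1) * ExteriorAlgebra.ι ℂ (Pi.single p.2 1))) : MV n)
      = AddMonoidAlgebra.single 0 (ExteriorAlgebra.ι ℂ (EE n p.1) * ExteriorAlgebra.ι ℂ (EE n p.2)) := by
    intro p
    rw [map_mul, ExteriorAlgebra.map_apply_ι, ExteriorAlgebra.map_apply_ι, q_EE, q_EE]
    rfl
  simp only [h1]
  rw [single_finset_sum', key, piT]
  simp only [one_smul]
  have h2 : ∀ p : Fin n × Fin n,
      v n p.1.succ * v n p.2.succ =
      AddMonoidAlgebra.single 0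
        (ExteriorAlgebra.ι ℂ (EE n p.1.succ) * ExteriorAlgebra.ι ℂ (EE n p.2.succ)) := by
    intro p
    unfold v
    refine (AddMonoidAlgebra.single_mul_single ..).trans ?_
    rw [show (0 : Fin n → ℤ) + 0 = 0 from by abel]
  simp only [h2]
  rw [single_finset_sum']

end CPn
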